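/- In NSym^(l), the antipode satisfies apode(S_n) = Σ_{I ⊨ n} (-1)^{len(I)} S^I for every nonzero n ∈ N^l. -/

import Mathlib

open TensorProduct

/-- The level-`l` noncommutative symmetric functions: the free associative
`ℚ`-algebra on generators `S_n`, `n ∈ ℕ^l \ {0}`. -/
abbrev NSym (l : ℕ) : Type := FreeAlgebra ℚ {n : Fin l → ℕ // n ≠ 0}

/-- The complete homogeneous generators `S_n` (with `S_0 = 1`). -/
noncomputable def Sgen (l : ℕ) (n : Fin l → ℕ) : NSym l :=
  if h : n = 0 then 1 else FreeAlgebra.ι ℚ ⟨n, h⟩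

/-- `I` is a vector composition of `n ∈ ℕ^l`. -/
def IsVComp {l : ℕ} (n : Fin l → ℕ) (I : List (Fin l → ℕ)) : Prop :=
  (∀ v ∈ I, v ≠ 0) ∧ I.sum = n

namespace AntAux
variable {l : ℕ}

def deg (n : Fin l → ℕ) : ℕ := ∑ i, n i

lemma deg_eq_zero {n : Fin l → ℕ} (h : deg n = 0) : n = 0 := by
  funext i
  have := Finset.sum_eq_zero_iff.mp h i (Finset.mem_univ i)
  exact this

lemma deg_sub_lt {n i : Fin l → ℕ} (hi : i ≤ n) (h0 : i ≠ 0) : deg (n - i) < deg n := by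
  obtain ⟨j, hj⟩ : ∃ j, i j ≠ 0 := by
    by_contra h; push_neg at h; exact h0 (funext fun j => h j)
  apply Finset.sum_lt_sum (fun k _ => Nat.sub_le _ _)
  refine ⟨j, Finset.mem_univ j, ?_⟩
  have h1 : i j ≤ n j := hi j
  have h2 : (n - i) j = n j - i j := rfl
  omega

lemma vcomp_zero : {I : List (Fin l → ℕ) | IsVComp 0 I} = {([] : List (Fin l → ℕ))} := by
  ext I
  simp only [Set.mem_setOf_eq, Set.mem_singleton_iff]
  constructor
  · rintro ⟨h1, h2⟩
    cases I with
    | nil => rfl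
    | cons v J =>
      exfalso
      apply h1 v (by simp)
      have hvv : v + J.sum = 0 := by simpa using h2
      funext k
      have := congrFun hvv k
      simp only [Pi.add_apply, Pi.zero_apply] at this ⊢
      omega
  · rintro rfl; exact ⟨by simp, rfl⟩

lemma vcomp_decomp {n : Fin l → ℕ} (hn : n ≠ 0) :
    {I : List (Fin l → ℕ) | IsVComp n I} =
      ⋃ j ∈ ((Finset.Icc 0 n).erase 0 : Finset (Fin l → ℕ)),
        (List.cons j) '' {J : List (Fin l → ℕ) | IsVComp (n - j) J} := by
  ext I
  simp only [Set.mem_setOf_eq, Set.mem_iUnion, Set.mem_image, Finset.mem_erase,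
    Finset.mem_Icc, exists_prop]
  constructor
  · rintro ⟨h1, h2⟩
    cases I with
    | nil => exact absurd h2.symm hn
    | cons v J =>
      have hsum : v + J.sum = n := by simpa using h2
      have hvn : v ≤ n := by
        intro k
        show v k ≤ n k
        have h : v k + J.sum k = n k := congrFun hsum k
        omega
      refine ⟨v, ⟨h1 v (by simp), by simp [hvn]⟩, J, ⟨fun w hw => h1 w (by simp [hw]), ?_⟩, rfl⟩
      funext k
      have h := congrFun hsum k
      simp only [Pi.add_apply] at h
      simp only [Pi.sub_apply]
      omega
  · rintro ⟨j, ⟨hj0, _, hjn⟩, J, ⟨hJ1, hJ2⟩, rfl⟩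
    refine ⟨fun w hw => ?_, ?_⟩
    · rcases List.mem_cons.mp hw with rfl | hw
      · exact hj0
      · exact hJ1 w hw
    · simp only [List.sum_cons, hJ2]
      funext k
      have h : j k ≤ n k := hjn k
      simp only [Pi.add_apply, Pi.sub_apply]
      omega

lemma vcomp_finite (n : Fin l → ℕ) : {I : List (Fin l → ℕ) | IsVComp n I}.Finite := by
  have key : ∀ d : ℕ, ∀ n : Fin l → ℕ, deg n ≤ d →
      {I : List (Fin l → ℕ) | IsVComp n I}.Finite := by
    intro d
    induction d with
    | zero =>
      intro n hn
      rw [deg_eq_zero (Nat.le_zero.mp hn), vcomp_zero]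
      exact Set.finite_singleton _
    | succ d ih =>
      intro n hn
      by_cases h0 : n = 0
      · rw [h0, vcomp_zero]; exact Set.finite_singleton _
      · rw [vcomp_decomp h0]
        apply Set.Finite.biUnion (Finset.finite_toSet _)
        intro j hj
        simp only [Finset.mem_coe, Finset.mem_erase, Finset.mem_Icc] at hj
        apply Set.Finite.image
        apply ih
        have := deg_sub_lt hj.2.2 hj.1
        omega
  exact key (deg n) n le_rfl

noncomputable def VC (n : Fin l → ℕ) : Finset (List (Fin l → ℕ)) := (vcomp_finite n).toFinset

noncomputable def F (l : ℕ) (n : Fin l → ℕ) : NSym l :=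
  ∑ I ∈ VC n, ((-1 : ℚ) ^ I.length) • (I.map (Sgen l)).prod

lemma F_zero : F l 0 = 1 := by
  have : VC (0 : Fin l → ℕ) = {([] : List (Fin l → ℕ))} := by
    simp [VC, Finset.ext_iff, Set.Finite.mem_toFinset, vcomp_zero]
  simp [F, this]

lemma F_rec {n : Fin l → ℕ} (hn : n ≠ 0) :
    F l n = -∑ j ∈ (Finset.Icc 0 n).erase 0, Sgen l j * F l (n - j) := by
  have hVC : VC n = ((Finset.Icc 0 n).erase 0).biUnion
      (fun j => (VC (n - j)).image (List.cons j)) := by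
    ext I
    have h := Set.ext_iff.mp (vcomp_decomp hn) I
    simp only [Set.mem_setOf_eq, Set.mem_iUnion, Set.mem_image, Finset.mem_coe,
      exists_prop] at h
    simp only [VC, Set.Finite.mem_toFinset, Finset.mem_biUnion, Finset.mem_image,
      Set.mem_setOf_eq]
    exact h
  rw [F, hVC, Finset.sum_biUnion]
  · rw [← Finset.sum_neg_distrib]
    apply Finset.sum_congr rfl
    intro j hj
    rw [Finset.sum_image (fun a _ b _ h => by injection h)]
    rw [F, Finset.mul_sum, ← Finset.sum_neg_distrib]
    apply Finset.sum_congr rfl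
    intro J hJ
    simp only [List.length_cons, List.map_cons, List.prod_cons, pow_succ]
    rw [mul_comm ((-1:ℚ)^J.length) (-1), mul_smul, neg_one_smul, mul_smul_comm]
  · intro a ha b hb hab
    simp only [Finset.disjoint_left, Finset.mem_image]
    rintro I ⟨J, _, rfl⟩ ⟨K, _, hK⟩
    exact hab (by injection hK.symm)

end AntAux

/-- In `NSym^(l)` (free algebra on the `S_n` with coproduct
`Δ(S_n) = Σ_{i+j=n} S_i ⊗ S_j`, counit `ε` killing the generators, antipode
the map satisfying the antipode equations), the antipode satisfies
`apode(S_n) = Σ_{I ⊨ n} (-1)^{len(I)} S^I` for every nonzero `n ∈ ℕ^l`. -/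
theorem antipode_S {l : ℕ}
    (Δ : NSym l →ₐ[ℚ] NSym l ⊗[ℚ] NSym l)
    (hΔ : ∀ n : Fin l → ℕ,
      Δ (Sgen l n) = ∑ i ∈ Finset.Icc 0 n, Sgen l i ⊗ₜ[ℚ] Sgen l (n - i))
    (ε : NSym l →ₐ[ℚ] ℚ)
    (hε : ∀ n : Fin l → ℕ, n ≠ 0 → ε (Sgen l n) = 0)
    (apode : NSym l →ₗ[ℚ] NSym l)
    (hap₁ : ∀ h : NSym l,
      LinearMap.mul' ℚ (NSym l)
        (TensorProduct.map apode (LinearMap.id : NSym l →ₗ[ℚ] NSym l) (Δ h))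
        = ε h • 1)
    (hap₂ : ∀ h : NSym l,
      LinearMap.mul' ℚ (NSym l)
        (TensorProduct.map (LinearMap.id : NSym l →ₗ[ℚ] NSym l) apode (Δ h))
        = ε h • 1) :
    ∀ n : Fin l → ℕ, n ≠ 0 →
      apode (Sgen l n) =
        ∑ᶠ I ∈ {I : List (Fin l → ℕ) | IsVComp n I},
          ((-1 : ℚ) ^ I.length) • (I.map (Sgen l)).prod := by
  have hS0 : Sgen l 0 = 1 := dif_pos rfl
  have hap1 : apode 1 = 1 := by
    have h := hap₂ 1
    rw [map_one, Algebra.TensorProduct.one_def] at h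
    simpa using h
  have key : ∀ n : Fin l → ℕ, n ≠ 0 →
      ∑ i ∈ Finset.Icc 0 n, Sgen l i * apode (Sgen l (n - i)) = 0 := by
    intro n hn
    have h := hap₂ (Sgen l n)
    rw [hΔ n, map_sum, map_sum] at h
    simp only [TensorProduct.map_tmul, LinearMap.id_apply, LinearMap.mul'_apply] at h
    rw [hε n hn, zero_smul] at h
    exact h
  have main : ∀ d : ℕ, ∀ n : Fin l → ℕ, AntAux.deg n ≤ d →
      apode (Sgen l n) = AntAux.F l n := by
    intro d
    induction d with
    | zero =>
      intro n hn
      rw [AntAux.deg_eq_zero (Nat.le_zero.mp hn), hS0, hap1, AntAux.F_zero]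
    | succ d ih =>
      intro n hn
      by_cases h0 : n = 0
      · subst h0; rw [hS0, hap1, AntAux.F_zero]
      · have hk := key n h0
        rw [← Finset.add_sum_erase _ _
          (show (0 : Fin l → ℕ) ∈ Finset.Icc 0 n from
            Finset.mem_Icc.mpr ⟨le_refl _, zero_le⟩)] at hk
        rw [hS0, tsub_zero, one_mul] at hk
        have hsum : ∑ i ∈ (Finset.Icc 0 n).erase 0, Sgen l i * apode (Sgen l (n - i))
            = ∑ i ∈ (Finset.Icc 0 n).erase 0, Sgen l i * AntAux.F l (n - i) := by
          apply Finset.sum_congr rfl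
          intro i hi
          simp only [Finset.mem_erase, Finset.mem_Icc] at hi
          rw [ih _ (by have := AntAux.deg_sub_lt hi.2.2 hi.1; omega)]
        rw [hsum] at hk
        rw [AntAux.F_rec h0]
        exact eq_neg_of_add_eq_zero_left hk
  intro n hn
  rw [main (AntAux.deg n) n le_rfl]
  have hset : {I : List (Fin l → ℕ) | IsVComp n I} = ↑(AntAux.VC n) :=
    (AntAux.vcomp_finite n).coe_toFinset.symm
  rw [hset, finsum_mem_coe_finset]
  rfl
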